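/- Let m ∈ ℕ, let c > 0, P ≥ 0, λ ∈ [0,1), and T ∈ (0, ∞]. Let φ : ℝ → ℝ be differentiable with φ(t) ≥ c and |φ'(t)| ≤ P for all t ≥ 0, and let e : ℝ → ℝᵐ be differentiable on [0, T). Define e₁(t) := φ(t)·e(t). Assume ‖e₁(0)‖ < 1 and that for every t ∈ [0, T) with ‖e₁(t)‖ < 1 one has ‖ φ(t)·e'(t) + (1 − ‖e₁(t)‖²)⁻¹ · e₁(t) ‖ ≤ λ. Then ‖e₁(t)‖ < 1 for all t ∈ [0, T); equivalently, ‖e(t)‖ < 1/φ(t) for all t ∈ [0, T). -/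

import Mathlib

open Set Filter Topology

local notation "⟪" x ", " y "⟫" => @inner ℝ _ _ x y

set_option maxHeartbeats 1000000 in
theorem stmt_10 (m : ℕ) (c P lam : ℝ) (hc : 0 < c) (hP : 0 ≤ P)
    (hlam0 : 0 ≤ lam) (hlam1 : lam < 1)
    (T : EReal) (hT : 0 < T)
    (φ : ℝ → ℝ) (hφdiff : Differentiable ℝ φ)
    (hφc : ∀ t : ℝ, 0 ≤ t → c ≤ φ t)
    (hφ' : ∀ t : ℝ, 0 ≤ t → |deriv φ t| ≤ P)
    (e : ℝ → EuclideanSpace ℝ (Fin m))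
    (hediff : ∀ t : ℝ, 0 ≤ t → (t : EReal) < T → DifferentiableAt ℝ e t)
    (h0 : ‖φ 0 • e 0‖ < 1)
    (hbound : ∀ t : ℝ, 0 ≤ t → (t : EReal) < T → ‖φ t • e t‖ < 1 →
      ‖φ t • deriv e t + (1 - ‖φ t • e t‖ ^ 2)⁻¹ • (φ t • e t)‖ ≤ lam) :
    ∀ t : ℝ, 0 ≤ t → (t : EReal) < T →
      ‖φ t • e t‖ < 1 ∧ ‖e t‖ < 1 / φ t := by
  intro t ht htT
  have hφpos : ∀ s : ℝ, 0 ≤ s → 0 < φ s := fun s hs => lt_of_lt_of_le hc (hφc s hs)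
  suffices h : ‖φ t • e t‖ < 1 by
    refine ⟨h, ?_⟩
    have hp := hφpos t ht
    rw [norm_smul, Real.norm_eq_abs, abs_of_pos hp] at h
    rw [lt_div_iff₀ hp]
    linarith [mul_comm (φ t) ‖e t‖]
  by_contra hcon
  push_neg at hcon
  set V : ℝ → ℝ := fun s => ‖φ s • e s‖ ^ 2 with hVdef
  set K : ℝ := P / c + lam with hKdef
  have hK0 : 0 ≤ K := by positivity
  set ρ : ℝ := max ((2*K+1)/(2*K+2)) ((V 0 + 1)/2) with hρdef
  have hV0nn : 0 ≤ V 0 := by positivity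
  have hV0lt : V 0 < 1 := by
    simp only [hVdef]; nlinarith [norm_nonneg (φ 0 • e 0)]
  have hρlt1 : ρ < 1 := by
    apply max_lt
    · rw [div_lt_one (by linarith)]; linarith
    · linarith
  have hρ0 : 0 < ρ := lt_of_lt_of_le (by linarith) (le_max_right _ _)
  have hV0ρ : V 0 < ρ := lt_of_lt_of_le (by linarith) (le_max_right _ _)
  have hρK : (2*K+1) * (1 - ρ) ≤ ρ := by
    have h1 : (2*K+1)/(2*K+2) ≤ ρ := le_max_left _ _
    rw [div_le_iff₀ (by linarith)] at h1
    nlinarith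
  have hsT : ∀ s : ℝ, s ≤ t → (s : EReal) < T :=
    fun s hs => lt_of_le_of_lt (EReal.coe_le_coe_iff.mpr hs) htT
  have hediff' : ∀ s ∈ Icc (0:ℝ) t, DifferentiableAt ℝ e s :=
    fun s hs => hediff s hs.1 (hsT s hs.2)
  have hVcont : ContinuousOn V (Icc 0 t) := fun s hs =>
    (((hφdiff s).continuousAt.smul (hediff' s hs).continuousAt).norm.pow 2).continuousWithinAt
  set B : Set ℝ := Icc (0:ℝ) t ∩ V ⁻¹' (Ici ρ) with hBdef
  have hVt : ρ ≤ V t := by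
    simp only [hVdef]; nlinarith [norm_nonneg (φ t • e t)]
  have htB : t ∈ B := ⟨⟨ht, le_rfl⟩, hVt⟩
  have hBclosed : IsClosed B :=
    hVcont.preimage_isClosed_of_isClosed isClosed_Icc isClosed_Ici
  have hBbdd : BddBelow B := ⟨0, fun s hs => hs.1.1⟩
  set τ := sInf B with hτdef
  have hτB : τ ∈ B := hBclosed.csInf_mem ⟨t, htB⟩ hBbdd
  have hτ0 : 0 ≤ τ := hτB.1.1
  have hτt : τ ≤ t := hτB.1.2
  have hlt : ∀ s, 0 ≤ s → s < τ → V s < ρ := by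
    intro s hs0 hsτ
    by_contra hge
    push_neg at hge
    exact absurd (csInf_le hBbdd ⟨⟨hs0, le_trans hsτ.le hτt⟩, hge⟩) (not_le.mpr hsτ)
  have hτpos : 0 < τ := by
    rcases eq_or_lt_of_le hτ0 with h | h
    · exact absurd hτB.2 (by rw [← h]; exact not_le.mpr hV0ρ)
    · exact h
  have hcontτ : ContinuousAt V τ :=
    ((hφdiff τ).continuousAt.smul (hediff' τ ⟨hτ0, hτt⟩).continuousAt).norm.pow 2
  have hVτle : V τ ≤ ρ := by
    refine le_of_tendsto (hcontτ.tendsto.mono_left (nhdsWithin_le_nhds (s := Iio τ))) ?_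
    filter_upwards [Ioo_mem_nhdsLT_of_mem (⟨hτpos, le_rfl⟩ : τ ∈ Ioc 0 τ)] with s hs
    exact (hlt s hs.1.le hs.2).le
  have hVτ : V τ = ρ := le_antisymm hVτle hτB.2
  set u : EuclideanSpace ℝ (Fin m) := φ τ • e τ with hudef
  have hun : ‖u‖ ^ 2 = ρ := hVτ
  have hu1 : ‖u‖ < 1 := by nlinarith [norm_nonneg u]
  have hzb := hbound τ hτ0 (hsT τ hτt) hu1
  set z : EuclideanSpace ℝ (Fin m) :=
    φ τ • deriv e τ + (1 - ‖u‖ ^ 2)⁻¹ • u with hzdef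
  set u' : EuclideanSpace ℝ (Fin m) := φ τ • deriv e τ + deriv φ τ • e τ with hu'def
  have he1 : HasDerivAt (fun s => φ s • e s) u' τ := by
    have := (hφdiff τ).hasDerivAt.smul (hediff' τ ⟨hτ0, hτt⟩).hasDerivAt
    exact this
  have hVd : HasDerivAt V (2 * ⟪u', u⟫) τ := by
    have hg : HasDerivAt (fun s => ⟪(φ s • e s), (φ s • e s)⟫) (⟪u, u'⟫ + ⟪u', u⟫) τ :=
      he1.inner ℝ he1
    have hfun : V = fun s => ⟪(φ s • e s), (φ s • e s)⟫ := by
      funext s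
      rw [hVdef, real_inner_self_eq_norm_sq]
    rw [hfun]
    have : ⟪u, u'⟫ + ⟪u', u⟫ = 2 * ⟪u', u⟫ := by rw [real_inner_comm u u']; ring
    rw [← this]
    exact hg
  have hnn : 0 ≤ 2 * ⟪u', u⟫ := by
    have hslope := hasDerivAt_iff_tendsto_slope.mp hVd
    have hmono : Tendsto (slope V τ) (𝓝[<] τ) (𝓝 (2 * ⟪u', u⟫)) :=
      hslope.mono_left (nhdsWithin_mono τ (fun s hs => ne_of_lt hs))
    refine ge_of_tendsto hmono ?_
    filter_upwards [Ioo_mem_nhdsLT_of_mem (⟨hτpos, le_rfl⟩ : τ ∈ Ioc 0 τ)] with s hs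
    have hVs : V s < ρ := hlt s hs.1.le hs.2
    rw [slope_def_field]
    refine div_nonneg_iff.mpr (Or.inr ⟨?_, ?_⟩)
    · rw [hVτ]; linarith
    · linarith [hs.2]
  have hA : ⟪deriv φ τ • e τ, u⟫ ≤ P / c := by
    have h1 : ⟪deriv φ τ • e τ, u⟫ ≤ ‖deriv φ τ • e τ‖ * ‖u‖ := real_inner_le_norm _ _
    have h2 : ‖deriv φ τ • e τ‖ = |deriv φ τ| * ‖e τ‖ := by
      rw [norm_smul, Real.norm_eq_abs]
    have hφτ := hφc τ hτ0
    have he_le : ‖e τ‖ ≤ 1 / c := by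
      have hnormu : ‖u‖ = φ τ * ‖e τ‖ := by
        rw [hudef, norm_smul, Real.norm_eq_abs, abs_of_pos (hφpos τ hτ0)]
      have : φ τ * ‖e τ‖ ≤ 1 := by rw [← hnormu]; exact hu1.le
      rw [le_div_iff₀ hc]
      nlinarith [norm_nonneg (e τ), hφpos τ hτ0]
    have hd := hφ' τ hτ0
    have h3 : |deriv φ τ| * ‖e τ‖ ≤ P * (1 / c) :=
      mul_le_mul hd he_le (norm_nonneg _) hP
    calc ⟪deriv φ τ • e τ, u⟫ ≤ ‖deriv φ τ • e τ‖ * ‖u‖ := h1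
      _ ≤ (P * (1 / c)) * 1 := by
          apply mul_le_mul (by rw [h2]; exact h3) hu1.le (norm_nonneg _) (by positivity)
      _ = P / c := by ring
  have hBz : ⟪z, u⟫ ≤ lam := by
    have h1 : ⟪z, u⟫ ≤ ‖z‖ * ‖u‖ := real_inner_le_norm _ _
    have h2 : ‖z‖ * ‖u‖ ≤ lam * 1 :=
      mul_le_mul hzb hu1.le (norm_nonneg _) hlam0
    linarith
  have hsplit : ⟪φ τ • deriv e τ, u⟫ = ⟪z, u⟫ - (1 - ρ)⁻¹ * ρ := by
    have hzu : φ τ • deriv e τ = z - (1 - ‖u‖ ^ 2)⁻¹ • u := by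
      rw [hzdef]; abel
    rw [hzu, inner_sub_left, real_inner_smul_left, real_inner_self_eq_norm_sq, hun]
  have hC : 2*K+1 ≤ (1 - ρ)⁻¹ * ρ := by
    rw [inv_mul_eq_div, le_div_iff₀ (by linarith)]
    linarith
  have hneg : ⟪u', u⟫ ≤ (lam - (1 - ρ)⁻¹ * ρ) + P / c := by
    rw [hu'def, inner_add_left, hsplit]
    exact add_le_add (sub_le_sub_right hBz _) hA
  have hKeq : lam + P / c = K := by rw [hKdef]; ring
  have h1 : (0:ℝ) ≤ ⟪u', u⟫ := by linarith
  have h2 : (1 - ρ)⁻¹ * ρ ≤ lam + P / c := by linarith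
  have h3 : 2 * K + 1 ≤ K := le_trans hC (hKeq ▸ h2)
  linarith [h3, hK0]
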